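/- (Exact form of Lemma 2) In the general fitness model, the expected one-step change in the visibility of node i, conditioned on the current graph and the fitness of the incoming node, satisfies the exact identity ∑_{s∈V} (g_s/Γ) · (g(ξ_i, D(i) + 1{s=i})/(Γ + Δ_s + g_new)) − g_i/Γ = (g_i/Γ) · ((∑_{j≠i} g_j)·Δ_i − g_new·g_i)/(Γ·(Γ + Δ_i + g_new)) − ∑_{k≠i} (g_k/Γ) · g_i·(Δ_k + g_new)/(Γ·(Γ + Δ_k + g_new)). -/

import Mathlib

open Finset

/-- Exact form of Lemma 2: in the general fitness model, the expected one-step change in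
the visibility of node `i`, conditioned on the current graph and the fitness of the
incoming node, satisfies the stated exact identity. -/
theorem gf_expected_visibility_change_exact
    {V : Type*} [Fintype V] [DecidableEq V]
    (g : ℝ → ℕ → ℝ) (ξ : V → ℝ) (D : V → ℕ)
    (hg : ∀ j, 0 < g (ξ j) (D j))
    (hΔ : ∀ j, g (ξ j) (D j) ≤ g (ξ j) (D j + 1))
    (Γ : ℝ) (hΓ : Γ = ∑ j, g (ξ j) (D j))
    (ξnew : ℝ) (hgnew : 0 < g ξnew 1) (i : V) :
    (∑ s, (g (ξ s) (D s) / Γ)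
          * (g (ξ i) (D i + if s = i then 1 else 0)
              / (Γ + (g (ξ s) (D s + 1) - g (ξ s) (D s)) + g ξnew 1)))
        - g (ξ i) (D i) / Γ
      = (g (ξ i) (D i) / Γ) *
          (((∑ j ∈ univ.erase i, g (ξ j) (D j)) * (g (ξ i) (D i + 1) - g (ξ i) (D i))
              - g ξnew 1 * g (ξ i) (D i))
            / (Γ * (Γ + (g (ξ i) (D i + 1) - g (ξ i) (D i)) + g ξnew 1)))
        - ∑ k ∈ univ.erase i, (g (ξ k) (D k) / Γ)
            * (g (ξ i) (D i) * ((g (ξ k) (D k + 1) - g (ξ k) (D k)) + g ξnew 1)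
                / (Γ * (Γ + (g (ξ k) (D k + 1) - g (ξ k) (D k)) + g ξnew 1))) := by
  have hΔ' : ∀ j, 0 ≤ g (ξ j) (D j + 1) - g (ξ j) (D j) := fun j => by linarith [hΔ j]
  have hΓpos : 0 < Γ := by
    rw [hΓ]; exact Finset.sum_pos (fun j _ => hg j) ⟨i, Finset.mem_univ i⟩
  have hden : ∀ s : V, 0 < Γ + (g (ξ s) (D s + 1) - g (ξ s) (D s)) + g ξnew 1 :=
    fun s => by have := hΔ' s; linarith
  set f : V → ℝ := fun s => (g (ξ s) (D s) / Γ)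
          * (g (ξ i) (D i + if s = i then 1 else 0)
              / (Γ + (g (ξ s) (D s + 1) - g (ξ s) (D s)) + g ξnew 1)) with hf
  set U : V → ℝ := fun k => (g (ξ k) (D k) / Γ)
            * (g (ξ i) (D i) * ((g (ξ k) (D k + 1) - g (ξ k) (D k)) + g ξnew 1)
                / (Γ * (Γ + (g (ξ k) (D k + 1) - g (ξ k) (D k)) + g ξnew 1))) with hU
  have key1 : ∀ k ∈ univ.erase i,
      f k = g (ξ k) (D k) * g (ξ i) (D i) / (Γ * Γ) - U k := by
    intro k hk
    have hki : k ≠ i := Finset.ne_of_mem_erase hk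
    have h1 := hden k
    simp only [hf, hU, if_neg hki]
    field_simp
    ring
  have hsum_erase : ∑ k ∈ univ.erase i, g (ξ k) (D k) = Γ - g (ξ i) (D i) := by
    have := Finset.add_sum_erase univ (fun j => g (ξ j) (D j)) (Finset.mem_univ i)
    rw [hΓ]; linarith
  have key2 : f i = (g (ξ i) (D i) / Γ) *
          (((∑ j ∈ univ.erase i, g (ξ j) (D j)) * (g (ξ i) (D i + 1) - g (ξ i) (D i))
              - g ξnew 1 * g (ξ i) (D i))
            / (Γ * (Γ + (g (ξ i) (D i + 1) - g (ξ i) (D i)) + g ξnew 1)))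
          + g (ξ i) (D i) * g (ξ i) (D i) / (Γ * Γ) := by
    have h1 := hden i
    simp only [hf, if_pos rfl, if_true, hsum_erase]
    field_simp
    ring
  rw [← Finset.add_sum_erase univ f (Finset.mem_univ i), key2,
    Finset.sum_congr rfl key1, Finset.sum_sub_distrib, ← Finset.sum_div,
    ← Finset.sum_mul, hsum_erase]
  have : g (ξ i) (D i) * g (ξ i) (D i) / (Γ * Γ)
      + (Γ - g (ξ i) (D i)) * g (ξ i) (D i) / (Γ * Γ) - g (ξ i) (D i) / Γ = 0 := by
    field_simp
    ring
  linarith
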